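/- A group containing an infinite acentral subgroup of infinite index is not presentable by a product. -/

import Mathlib

/-- A group is presentable by a product if it has elementwise-commuting infinite
subgroups whose union generates a finite-index subgroup. -/
def PresentableByProduct (G : Type*) [Group G] : Prop :=
  ∃ G₁ G₂ : Subgroup G, (G₁ : Set G).Infinite ∧ (G₂ : Set G).Infinite ∧
    (∀ g₁ ∈ G₁, ∀ g₂ ∈ G₂, g₁ * g₂ = g₂ * g₁) ∧
    (Subgroup.closure ((G₁ : Set G) ∪ (G₂ : Set G))).FiniteIndex

/-- A subgroup is acentral if the centraliser of each of its non-trivial elements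
is contained in it. -/
def IsAcentral {G : Type*} [Group G] (A : Subgroup G) : Prop :=
  ∀ g ∈ A, g ≠ 1 → ∀ x : G, x * g = g * x → x ∈ A

theorem stmt_3 {Γ : Type*} [Group Γ] (A : Subgroup Γ)
    (hac : IsAcentral A) (hinf : (A : Set Γ).Infinite) (hidx : A.index = 0) :
    ¬ PresentableByProduct Γ := by
  rintro ⟨G₁, G₂, h1inf, h2inf, hcomm, hfin⟩
  set H := Subgroup.closure ((G₁ : Set Γ) ∪ (G₂ : Set Γ)) with hH
  -- product set subgroup
  have hprod : ∀ x ∈ H, ∃ g₁ ∈ G₁, ∃ g₂ ∈ G₂, g₁ * g₂ = x := by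
    let K : Subgroup Γ :=
      { carrier := {x | ∃ g₁ ∈ G₁, ∃ g₂ ∈ G₂, g₁ * g₂ = x}
        one_mem' := ⟨1, one_mem _, 1, one_mem _, one_mul 1⟩
        mul_mem' := by
          rintro x y ⟨a, ha, b, hb, rfl⟩ ⟨c, hc, d, hd, rfl⟩
          exact ⟨a * c, mul_mem ha hc, b * d, mul_mem hb hd, by
            rw [mul_assoc, ← mul_assoc c b d, hcomm c hc b hb]; simp [mul_assoc]⟩
        inv_mem' := by
          rintro x ⟨a, ha, b, hb, rfl⟩
          exact ⟨a⁻¹, inv_mem ha, b⁻¹, inv_mem hb, by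
            rw [mul_inv_rev, hcomm a⁻¹ (inv_mem ha) b⁻¹ (inv_mem hb)]⟩ }
    intro x hx
    refine (Subgroup.closure_le K).mpr ?_ hx
    rintro y (hy | hy)
    · exact ⟨y, hy, 1, one_mem _, mul_one y⟩
    · exact ⟨1, one_mem _, y, hy, one_mul y⟩
  -- a nontrivial element of A ⊓ H
  have hrel : H.relIndex A ≠ 0 := fun h =>
    hfin.index_ne_zero (Subgroup.index_eq_zero_of_relIndex_eq_zero h)
  have hnt : ∃ a : Γ, a ∈ A ∧ a ∈ H ∧ a ≠ 1 := by
    by_contra hcon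
    push_neg at hcon
    have hbot : H.subgroupOf A = ⊥ := by
      rw [eq_bot_iff]
      rintro ⟨a, haA⟩ haH
      have := hcon a haA haH
      simpa [Subgroup.mem_bot, Subtype.ext_iff] using this
    have : H.relIndex A = Nat.card A := by
      rw [Subgroup.relIndex, hbot, Subgroup.index_bot]
    have hiA : Infinite A := Set.infinite_coe_iff.mpr hinf
    rw [this, Nat.card_eq_zero_of_infinite] at hrel
    exact hrel rfl
  obtain ⟨a, haA, haH, hane⟩ := hnt
  obtain ⟨g₁, hg₁, g₂, hg₂, rfl⟩ := hprod a haH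
  -- components lie in A
  have hcg : g₁ * g₂ = g₂ * g₁ := hcomm g₁ hg₁ g₂ hg₂
  have h1A : g₁ ∈ A := hac _ haA hane g₁ (by rw [mul_assoc, ← hcg, ← mul_assoc])
  have h2A : g₂ ∈ A := hac _ haA hane g₂ (by rw [← mul_assoc, hcg, mul_assoc])
  -- get a nontrivial element of A inside G₁ or G₂; conclude both G₁,G₂ ⊆ A
  have key : (G₁ : Set Γ) ∪ (G₂ : Set Γ) ⊆ A := by
    have step : ∀ c : Γ, c ∈ G₁ → c ∈ A → c ≠ 1 →
        (G₁ : Set Γ) ∪ (G₂ : Set Γ) ⊆ A := by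
      intro c hc hcA hcne
      have hG2 : ∀ y ∈ G₂, y ∈ A := fun y hy =>
        hac c hcA hcne y (hcomm c hc y hy).symm
      obtain ⟨b, hbG₂, hbne⟩ : ∃ b ∈ G₂, b ≠ (1 : Γ) := by
        obtain ⟨b, hb1, hb2⟩ := (h2inf.diff (Set.finite_singleton 1)).nonempty
        exact ⟨b, hb1, by simpa using hb2⟩
      have hbA : b ∈ A := hG2 b hbG₂
      have hG1 : ∀ y ∈ G₁, y ∈ A := fun y hy =>
        hac b hbA hbne y (hcomm y hy b hbG₂)
      rintro x (hx | hx)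
      · exact hG1 x hx
      · exact hG2 x hx
    have step' : ∀ c : Γ, c ∈ G₂ → c ∈ A → c ≠ 1 →
        (G₁ : Set Γ) ∪ (G₂ : Set Γ) ⊆ A := by
      intro c hc hcA hcne
      have hG1 : ∀ y ∈ G₁, y ∈ A := fun y hy =>
        hac c hcA hcne y (hcomm y hy c hc)
      obtain ⟨b, hbG₁, hbne⟩ : ∃ b ∈ G₁, b ≠ (1 : Γ) := by
        obtain ⟨b, hb1, hb2⟩ := (h1inf.diff (Set.finite_singleton 1)).nonempty
        exact ⟨b, hb1, by simpa using hb2⟩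
      have hbA : b ∈ A := hG1 b hbG₁
      have hG2 : ∀ y ∈ G₂, y ∈ A := fun y hy =>
        hac b hbA hbne y (hcomm b hbG₁ y hy).symm
      rintro x (hx | hx)
      · exact hG1 x hx
      · exact hG2 x hx
    rcases eq_or_ne g₁ 1 with h1 | h1
    · have h2ne : g₂ ≠ 1 := by rintro rfl; exact hane (by rw [h1, mul_one])
      exact step' g₂ hg₂ h2A h2ne
    · exact step g₁ hg₁ h1A h1
  have hHA : H ≤ A := (Subgroup.closure_le A).mpr key
  have hdvd : A.index ∣ H.index := Subgroup.index_dvd_of_le hHA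
  rw [hidx] at hdvd
  exact hfin.index_ne_zero (zero_dvd_iff.mp hdvd)
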